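/- Let X be a countable alphabet, p a probability distribution on X, and X_1,...,X_n i.i.d. samples from p with empirical estimator p̂_u = #{i ≤ n : X_i = u}/n. Let m be a positive even integer, d = m/2, and let c_{k,m,n} (1 ≤ k ≤ d) be real coefficients satisfying the binomial central-moment identity. Then for every a > 0, P( sup_{u∈X} |p_u − p̂_u| ≥ a ) ≤ (n a)^{−m} Σ_{u∈X} Σ_{k=1}^{d} c_{k,m,n} (p_u(1−p_u))^k. -/

import Mathlib

open MeasureTheory ProbabilityTheory Finset

/-- The empirical (maximum likelihood) estimator `p̂_u = #{i ≤ n : X_i = u} / n`. -/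
noncomputable def emp {𝒳 : Type*} [DecidableEq 𝒳] {Ω : Type*} {n : ℕ}
    (X : Fin n → Ω → 𝒳) (ω : Ω) (u : 𝒳) : ℝ :=
  ((Finset.univ.filter (fun i => X i ω = u)).card : ℝ) / n

/-- The coefficients `c k` (for `1 ≤ k ≤ d`) satisfy the binomial central-moment identity:
for every `θ ∈ [0,1]` and `Y ~ Bin(n, θ)`,
`E[(Y - nθ)^m] = ∑_{k=1}^d c k (θ(1-θ))^k`. -/
def MomentIdentity (n m d : ℕ) (c : ℕ → ℝ) : Prop :=
  ∀ θ : ℝ, θ ∈ Set.Icc (0:ℝ) 1 →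
    ∑ y ∈ Finset.range (n+1),
        (n.choose y : ℝ) * θ^y * (1-θ)^(n-y) * ((y:ℝ) - n*θ)^m
      = ∑ k ∈ Finset.Icc 1 d, c k * (θ*(1-θ))^k

section aux
variable {𝒳 : Type*} [DecidableEq 𝒳] [MeasurableSpace 𝒳] [MeasurableSingletonClass 𝒳]
  {Ω : Type*} [MeasureSpace Ω] [IsProbabilityMeasure (ℙ : Measure Ω)]
  {n : ℕ} {X : Fin n → Ω → 𝒳}

lemma binom_count (hmeas : ∀ i, Measurable (X i))
    (hindep : iIndepFun X ℙ) (u : 𝒳) {q : ℝ}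
    (hq0 : 0 ≤ q) (hq1 : q ≤ 1)
    (hq : ∀ i, ℙ {ω | X i ω = u} = ENNReal.ofReal q) (y : ℕ) :
    ℙ {ω | (Finset.univ.filter (fun i => X i ω = u)).card = y}
      = ENNReal.ofReal ((n.choose y : ℝ) * (q^y * (1-q)^(n-y))) := by
  classical
  set A : Fin n → Set Ω := fun i => {ω | X i ω = u} with hA
  have hAmeas : ∀ i, MeasurableSet (A i) := fun i => (hmeas i) (measurableSet_singleton u)
  have hAc : ∀ i, ℙ (A i)ᶜ = ENNReal.ofReal (1 - q) := by
    intro i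
    rw [prob_compl_eq_one_sub (hAmeas i), hq i, ENNReal.ofReal_sub _ hq0, ENNReal.ofReal_one]
  set E : Finset (Fin n) → Set Ω := fun s => ⋂ i, (if i ∈ s then A i else (A i)ᶜ) with hE
  have hEmeas : ∀ s, MeasurableSet (E s) := by
    intro s
    exact MeasurableSet.iInter fun i => by split <;> [exact hAmeas i; exact (hAmeas i).compl]
  have hEmem : ∀ s ω, ω ∈ E s ↔ ∀ i, (X i ω = u ↔ i ∈ s) := by
    intro s ω
    simp only [hE, Set.mem_iInter]
    constructor
    · intro h i
      have := h i
      split at this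
      · simp only [hA, Set.mem_setOf_eq] at this; tauto
      · simp only [hA, Set.mem_compl_iff, Set.mem_setOf_eq] at this; tauto
    · intro h i
      have := h i
      split
      · simp only [hA, Set.mem_setOf_eq]; tauto
      · simp only [hA, Set.mem_compl_iff, Set.mem_setOf_eq]; tauto
  have hEprob : ∀ s : Finset (Fin n),
      ℙ (E s) = ENNReal.ofReal (q ^ s.card * (1-q) ^ (n - s.card)) := by
    intro s
    have hmi := hindep.meas_iInter (s := fun i => if i ∈ s then A i else (A i)ᶜ) ?_
    · rw [hE, hmi]
      have h1 : ∀ i : Fin n, ℙ (if i ∈ s then A i else (A i)ᶜ)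
          = if i ∈ s then ENNReal.ofReal q else ENNReal.ofReal (1-q) := by
        intro i; split <;> [exact hq i; exact hAc i]
      rw [Finset.prod_congr rfl (fun i _ => h1 i), Finset.prod_ite, Finset.prod_const,
        Finset.prod_const]
      have h2 : (Finset.univ.filter (fun i => i ∈ s)).card = s.card := by
        congr 1; ext i; simp
      have h3 : (Finset.univ.filter (fun i => ¬ i ∈ s)).card = n - s.card := by
        have : (Finset.univ.filter (fun i => ¬ i ∈ s)) = sᶜ := by ext i; simp
        rw [this, Finset.card_compl, Fintype.card_fin]
      rw [h2, h3, ← ENNReal.ofReal_pow hq0, ← ENNReal.ofReal_pow (by linarith),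
        ← ENNReal.ofReal_mul (by positivity)]
    · intro i
      by_cases h : i ∈ s
      · simp only [h, if_true]
        exact ⟨{u}, measurableSet_singleton u, rfl⟩
      · simp only [h, if_false]
        exact ⟨({u} : Set 𝒳)ᶜ, (measurableSet_singleton u).compl, rfl⟩
  have hunion : {ω | (Finset.univ.filter (fun i => X i ω = u)).card = y}
      = ⋃ s ∈ Finset.powersetCard y (Finset.univ : Finset (Fin n)), E s := by
    ext ω
    simp only [Set.mem_setOf_eq, Set.mem_iUnion, Finset.mem_powersetCard]
    constructor
    · intro h
      refine ⟨Finset.univ.filter (fun i => X i ω = u), ⟨Finset.subset_univ _, h⟩, ?_⟩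
      rw [hEmem]
      intro i; simp
    · rintro ⟨s, ⟨-, hcard⟩, hωs⟩
      rw [hEmem] at hωs
      have : Finset.univ.filter (fun i => X i ω = u) = s := by
        ext i; simp [hωs i]
      rw [this, hcard]
  rw [hunion, measure_biUnion_finset ?_ (fun s _ => hEmeas s)]
  · rw [Finset.sum_congr rfl (fun s hs => by
      rw [hEprob s, (Finset.mem_powersetCard.mp hs).2])]
    rw [Finset.sum_const, Finset.card_powersetCard, Finset.card_univ, Fintype.card_fin,
      nsmul_eq_mul, ← ENNReal.ofReal_natCast, ← ENNReal.ofReal_mul (by positivity)]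
  · intro s hs t ht hst
    rw [Function.onFun, Set.disjoint_left]
    intro ω hωs hωt
    rw [hEmem] at hωs hωt
    apply hst
    ext i
    rw [← hωs i, hωt i]

lemma tail_bound (hmeas : ∀ i, Measurable (X i))
    (hindep : iIndepFun X ℙ) (hn : 1 ≤ n) (u : 𝒳) {q : ℝ}
    (hq0 : 0 ≤ q) (hq1 : q ≤ 1)
    (hq : ∀ i, ℙ {ω | X i ω = u} = ENNReal.ofReal q)
    {m : ℕ} (hm : Even m) {a' : ℝ} (ha' : 0 < a') :
    ℙ {ω | a' < |q - emp X ω u|} ≤ ENNReal.ofReal ((1/((n:ℝ)*a')^m) *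
      ∑ y ∈ Finset.range (n+1),
        (n.choose y : ℝ) * q^y * (1-q)^(n-y) * ((y:ℝ) - n*q)^m) := by
  classical
  have hnpos : (0:ℝ) < n := by exact_mod_cast hn
  have hP : ∀ y : ℕ, (0:ℝ) ≤ (n.choose y : ℝ) * q^y * (1-q)^(n-y) := fun y =>
    mul_nonneg (mul_nonneg (Nat.cast_nonneg _) (pow_nonneg hq0 _))
      (pow_nonneg (by linarith) _)
  have hQ : ∀ y : ℕ, (0:ℝ) ≤ (n.choose y : ℝ) * q^y * (1-q)^(n-y) * ((y:ℝ) - n*q)^m :=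
    fun y => mul_nonneg (hP y) (hm.pow_nonneg _)
  set bad : Finset ℕ := (Finset.range (n+1)).filter (fun y => a' < |q - (y:ℝ)/n|) with hbad
  have hsub : {ω | a' < |q - emp X ω u|}
      ⊆ ⋃ y ∈ bad, {ω | (Finset.univ.filter (fun i => X i ω = u)).card = y} := by
    intro ω hω
    simp only [Set.mem_setOf_eq] at hω
    have hcard : (Finset.univ.filter (fun i => X i ω = u)).card ≤ n := by
      simpa using Finset.card_filter_le (Finset.univ : Finset (Fin n)) _
    simp only [Set.mem_iUnion, hbad, Finset.mem_filter, Finset.mem_range]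
    exact ⟨_, ⟨Nat.lt_succ_of_le hcard, hω⟩, rfl⟩
  refine le_trans (le_trans (measure_mono hsub) (measure_biUnion_finset_le _ _)) ?_
  have key : ∀ y ∈ bad, ℙ {ω | (Finset.univ.filter (fun i => X i ω = u)).card = y}
      ≤ ENNReal.ofReal ((1/((n:ℝ)*a')^m) *
          ((n.choose y : ℝ) * q^y * (1-q)^(n-y) * ((y:ℝ) - n*q)^m)) := by
    intro y hy
    rw [binom_count hmeas hindep u hq0 hq1 hq y]
    apply ENNReal.ofReal_le_ofReal
    have hyb : a' < |q - (y:ℝ)/n| := (Finset.mem_filter.mp hy).2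
    have h1 : (n:ℝ)*a' < |(y:ℝ) - n*q| := by
      have e : ((y:ℝ) - n*q) = -((n:ℝ) * (q - (y:ℝ)/n)) := by field_simp; ring
      rw [e, abs_neg, abs_mul, abs_of_pos hnpos]
      exact (mul_lt_mul_iff_right₀ hnpos).mpr hyb
    have h2 : ((n:ℝ)*a')^m ≤ ((y:ℝ) - n*q)^m := by
      calc ((n:ℝ)*a')^m ≤ |(y:ℝ) - n*q|^m := by
            apply pow_le_pow_left₀ (by positivity) h1.le
        _ = ((y:ℝ) - n*q)^m := hm.pow_abs _
    have h3 : (0:ℝ) < ((n:ℝ)*a')^m := by positivity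
    have hr : 1 ≤ ((y:ℝ) - n*q)^m / ((n:ℝ)*a')^m := (one_le_div h3).mpr h2
    have h4 := mul_le_mul_of_nonneg_left hr (hP y)
    rw [mul_one] at h4
    have h5 : (1/((n:ℝ)*a')^m) * ((n.choose y : ℝ) * q^y * (1-q)^(n-y) * ((y:ℝ) - n*q)^m)
        = ((n.choose y : ℝ) * q^y * (1-q)^(n-y)) * (((y:ℝ) - n*q)^m / ((n:ℝ)*a')^m) := by
      ring
    rw [h5]
    calc (n.choose y : ℝ) * (q^y * (1-q)^(n-y))
        = (n.choose y : ℝ) * q^y * (1-q)^(n-y) := by ring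
      _ ≤ _ := h4
  refine le_trans (Finset.sum_le_sum key) ?_
  rw [← ENNReal.ofReal_sum_of_nonneg (fun y _ =>
    mul_nonneg (by positivity) (hQ y))]
  apply ENNReal.ofReal_le_ofReal
  rw [← Finset.mul_sum]
  exact mul_le_mul_of_nonneg_left
    (Finset.sum_le_sum_of_subset_of_nonneg (Finset.filter_subset _ _)
      (fun y _ _ => hQ y)) (by positivity)
end aux

/-- **Markov-type tail bound for the sup-norm deviation.** For every `a > 0`,
`P( sup_u |p_u - p̂_u| ≥ a ) ≤ (na)^{-m} ∑_u ∑_{k=1}^{m/2} c_{k,m,n} (p_u(1-p_u))^k`. -/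
theorem supNorm_markov_tail_bound
    {𝒳 : Type*} [Countable 𝒳] [DecidableEq 𝒳]
    [MeasurableSpace 𝒳] [MeasurableSingletonClass 𝒳]
    {Ω : Type*} [MeasureSpace Ω] [IsProbabilityMeasure (ℙ : Measure Ω)]
    (p : 𝒳 → ℝ) (hp0 : ∀ u, 0 ≤ p u) (hp1 : ∑' u, p u = 1)
    (n : ℕ) (hn : 1 ≤ n)
    (X : Fin n → Ω → 𝒳) (hmeas : ∀ i, Measurable (X i))
    (hindep : iIndepFun X ℙ)
    (hdist : ∀ i u, (ℙ {ω | X i ω = u}).toReal = p u)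
    (m : ℕ) (hm : Even m) (hm0 : 0 < m) (d : ℕ) (hd : d = m / 2)
    (c : ℕ → ℝ) (hc : MomentIdentity n m d c)
    (a : ℝ) (ha : 0 < a) :
    ℙ {ω | a ≤ ⨆ u, |p u - emp X ω u|} ≤
      ENNReal.ofReal ((1/((n:ℝ)*a)^m) *
        ∑' u, ∑ k ∈ Finset.Icc 1 d, c k * (p u * (1 - p u))^k) := by
  classical
  cases isEmpty_or_nonempty 𝒳 with
  | inl hempty =>
    have : {ω : Ω | a ≤ ⨆ u, |p u - emp X ω u|} = ∅ := by
      ext ω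
      simp only [Set.mem_setOf_eq, Set.mem_empty_iff_false, iff_false, not_le]
      rw [Real.iSup_of_isEmpty]
      exact ha
    rw [this, measure_empty]
    exact zero_le
  | inr hne =>
    have hnpos : (0:ℝ) < n := by exact_mod_cast hn
    have hsumm : Summable p := by
      by_contra h
      rw [tsum_eq_zero_of_not_summable h] at hp1
      norm_num at hp1
    have hp1' : ∀ u, p u ≤ 1 := by
      intro u
      rw [← hp1]
      exact Summable.le_tsum hsumm u (fun v _ => hp0 v)
    have hq : ∀ u i, ℙ {ω | X i ω = u} = ENNReal.ofReal (p u) := by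
      intro u i
      rw [← hdist i u, ENNReal.ofReal_toReal (measure_ne_top _ _)]
    set M : 𝒳 → ℝ := fun u => ∑ k ∈ Finset.Icc 1 d, c k * (p u * (1 - p u))^k with hM
    have hMeq : ∀ u, M u = ∑ y ∈ Finset.range (n+1),
        (n.choose y : ℝ) * (p u)^y * (1 - p u)^(n-y) * ((y:ℝ) - n * p u)^m :=
      fun u => (hc (p u) ⟨hp0 u, hp1' u⟩).symm
    have hM0 : ∀ u, 0 ≤ M u := by
      intro u
      rw [hMeq u]
      refine Finset.sum_nonneg fun y _ => mul_nonneg ?_ (hm.pow_nonneg _)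
      exact mul_nonneg (mul_nonneg (Nat.cast_nonneg _) (pow_nonneg (hp0 u) _))
        (pow_nonneg (by linarith [hp1' u]) _)
    have hMle : ∀ u, M u ≤ (∑ k ∈ Finset.Icc 1 d, |c k|) * p u := by
      intro u
      rw [hM, Finset.sum_mul]
      refine Finset.sum_le_sum fun k hk => ?_
      have hx0 : 0 ≤ p u * (1 - p u) := mul_nonneg (hp0 u) (by linarith [hp1' u])
      have hx1 : p u * (1 - p u) ≤ p u := by nlinarith [hp0 u, hp1' u]
      have hk1 : k ≠ 0 := by have := (Finset.mem_Icc.mp hk).1; omega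
      have hpow : (p u * (1 - p u))^k ≤ p u := by
        calc (p u * (1 - p u))^k ≤ (p u * (1 - p u))^1 := by
              apply pow_le_pow_of_le_one hx0 (by nlinarith [hp0 u, hp1' u]) (by omega)
          _ = p u * (1 - p u) := pow_one _
          _ ≤ p u := hx1
      calc c k * (p u * (1 - p u))^k ≤ |c k * (p u * (1 - p u))^k| := le_abs_self _
        _ = |c k| * (p u * (1 - p u))^k := by rw [abs_mul, abs_of_nonneg (pow_nonneg hx0 _)]
        _ ≤ |c k| * p u := mul_le_mul_of_nonneg_left hpow (abs_nonneg _)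
    have hMsumm : Summable M :=
      Summable.of_nonneg_of_le hM0 hMle (hsumm.mul_left _)
    -- main bound for each a' in (0, a)
    have main : ∀ a' ∈ Set.Ioo 0 a, ℙ {ω | a ≤ ⨆ u, |p u - emp X ω u|}
        ≤ ENNReal.ofReal ((1/((n:ℝ)*a')^m) * ∑' u, M u) := by
      rintro a' ⟨ha'0, ha'a⟩
      have hsub : {ω | a ≤ ⨆ u, |p u - emp X ω u|}
          ⊆ ⋃ u, {ω | a' < |p u - emp X ω u|} := by
        intro ω hω
        simp only [Set.mem_setOf_eq] at hω
        obtain ⟨u, hu⟩ := exists_lt_of_lt_ciSup (lt_of_lt_of_le ha'a hω)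
        exact Set.mem_iUnion.mpr ⟨u, hu⟩
      refine le_trans (measure_mono hsub) (le_trans (measure_iUnion_le _) ?_)
      have step : ∀ u : 𝒳, ℙ {ω | a' < |p u - emp X ω u|}
          ≤ ENNReal.ofReal ((1/((n:ℝ)*a')^m) * M u) := by
        intro u
        have := tail_bound hmeas hindep hn u (hp0 u) (hp1' u) (hq u) hm ha'0
        rwa [← hMeq u] at this
      refine le_trans (ENNReal.tsum_le_tsum step) ?_
      rw [← ENNReal.ofReal_tsum_of_nonneg
        (fun u => mul_nonneg (by positivity) (hM0 u)) ((hMsumm.mul_left _))]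
      rw [tsum_mul_left]
    -- take the limit a' → a from the left
    have hcont : Filter.Tendsto (fun a' : ℝ => ENNReal.ofReal ((1/((n:ℝ)*a')^m) * ∑' u, M u))
        (nhdsWithin a (Set.Iio a)) (nhds (ENNReal.ofReal ((1/((n:ℝ)*a)^m) * ∑' u, M u))) := by
      apply Filter.Tendsto.mono_left _ nhdsWithin_le_nhds
      apply (ENNReal.continuous_ofReal.tendsto _).comp
      have h0 : ((n:ℝ)*a)^m ≠ 0 := by positivity
      exact ((continuousAt_const.div
        (((continuous_const.mul continuous_id).pow m).continuousAt) h0).mul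
        continuousAt_const)
    refine ge_of_tendsto hcont ?_
    filter_upwards [Ioo_mem_nhdsLT_of_mem (Set.mem_Ioc.mpr ⟨ha, le_refl a⟩)] with a' ha'
    exact main a' ha'
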